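/- For c_1,…,c_K > 0 and p_1,…,p_K ∈ (0,1), the function L(q) = −∑_{i=1}^n log(∑_{k=1}^K c_{ik} q_k^{Z_i}(1−q_k)^{1−Z_i}) defined on q ∈ (0,1)^K has a positive semidefinite Hessian at every interior point, i.e., −L is concave; moreover the Hessian equals ∑_{i=1}^n v_i v_i^⊤ where v_i ∈ ℝ^K has entries α_{ik}(q) s(Z_i, q_k). -/

import Mathlib

open MeasureTheory Finset Matrix

private lemma convexOn_finset_sum {ι : Type*} {E : Type*} [AddCommGroup E] [Module ℝ E]
    {s : Set E} (hs : Convex ℝ s) (t : Finset ι) {f : ι → E → ℝ}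
    (h : ∀ i ∈ t, ConvexOn ℝ s (f i)) :
    ConvexOn ℝ s (fun x => ∑ i ∈ t, f i x) := by
  classical
  induction t using Finset.cons_induction with
  | empty => simpa using convexOn_const 0 hs
  | cons i t hi ih =>
      simp only [Finset.sum_cons]
      exact (h i (Finset.mem_cons_self i t)).add
        (ih fun j hj => h j (Finset.mem_cons_of_mem hj))

/-- The negative log-likelihood `L(q) = −∑_i log(∑_k c_{ik} q_k^{Z_i}(1−q_k)^{1−Z_i})`
is convex on `(0,1)^K` (equivalently `−L` is concave), and its second derivative (Hessian)
at interior points equals `∑_i v_i v_iᵀ` with `v_i = (α_{ik}(q) s(Z_i, q_k))_k`,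
which is positive semidefinite. -/
theorem stmt3 (n K : ℕ) (hK : 0 < K)
    (Z : Fin n → ℝ) (hZ : ∀ i, Z i = 0 ∨ Z i = 1)
    (c : Fin n → Fin K → ℝ) (hc : ∀ i k, 0 < c i k)
    (L : (Fin K → ℝ) → ℝ)
    (hL : ∀ q : Fin K → ℝ,
      L q = -∑ i, Real.log (∑ k, c i k * (q k) ^ (Z i) * (1 - q k) ^ (1 - Z i)))
    (v : Fin n → (Fin K → ℝ) → Fin K → ℝ)
    (hv : ∀ i q k,
      v i q k = (c i k * (q k) ^ (Z i) * (1 - q k) ^ (1 - Z i) /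
          ∑ m, c i m * (q m) ^ (Z i) * (1 - q m) ^ (1 - Z i)) *
        (Z i / q k - (1 - Z i) / (1 - q k))) :
    ConvexOn ℝ (Set.pi Set.univ fun _ => Set.Ioo (0 : ℝ) 1) L ∧
    (∀ q ∈ Set.pi Set.univ fun _ => Set.Ioo (0 : ℝ) 1,
      (Matrix.PosSemidef (∑ i, Matrix.vecMulVec (v i q) (v i q))) ∧
      ∀ u w : Fin K → ℝ,
        iteratedFDeriv ℝ 2 L q ![u, w] =
          u ⬝ᵥ (∑ i, Matrix.vecMulVec (v i q) (v i q)).mulVec w) := by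
  classical
  set S : Set (Fin K → ℝ) := Set.pi Set.univ fun _ => Set.Ioo (0 : ℝ) 1 with hSdef
  have hSconv : Convex ℝ S := convex_pi fun _ _ => convex_Ioo 0 1
  have hSopen : IsOpen S := isOpen_set_pi Set.finite_univ fun _ _ => isOpen_Ioo
  set d : Fin n → Fin K → ℝ := fun i k => (2 * Z i - 1) * c i k with hd
  set e : Fin n → ℝ := fun i => (1 - Z i) * ∑ k, c i k with he
  set b : Fin n → (Fin K → ℝ) → ℝ := fun i q => e i + ∑ k, d i k * q k with hb
  -- the affine rewriting of the inner sum
  have hbeq : ∀ i q, (∑ k, c i k * (q k) ^ (Z i) * (1 - q k) ^ (1 - Z i)) = b i q := by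
    intro i q
    have hbq : b i q = (1 - Z i) * ∑ k, c i k + ∑ k, ((2 * Z i - 1) * c i k) * q k := rfl
    rw [hbq, Finset.mul_sum, ← Finset.sum_add_distrib]
    refine Finset.sum_congr rfl fun k _ => ?_
    rcases hZ i with h | h <;> rw [h] <;>
      norm_num [Real.rpow_zero, Real.rpow_one] <;> ring
  have hL' : L = fun q => -∑ i, Real.log (b i q) := by
    funext q; rw [hL]; simp only [hbeq]
  have hbpos : ∀ i, ∀ q ∈ S, 0 < b i q := by
    intro i q hq
    rw [← hbeq]
    apply Finset.sum_pos _ ⟨⟨0, hK⟩, Finset.mem_univ _⟩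
    intro k _
    have h1 : 0 < q k := (hq k (Set.mem_univ k)).1
    have h2 : (0:ℝ) < 1 - q k := by linarith [(hq k (Set.mem_univ k)).2]
    rcases hZ i with h | h <;> rw [h] <;>
      norm_num [Real.rpow_zero, Real.rpow_one]
    · exact mul_pos (hc i k) h2
    · exact mul_pos (hc i k) h1
  -- the continuous linear maps
  set D : Fin n → (Fin K → ℝ) →L[ℝ] ℝ :=
    fun i => ∑ k, d i k • (ContinuousLinearMap.proj k : (Fin K → ℝ) →L[ℝ] ℝ) with hDdef
  have hD : ∀ i q, D i q = ∑ k, d i k * q k := by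
    intro i q
    simp [hDdef, ContinuousLinearMap.sum_apply]
  have hbD : ∀ i q, HasFDerivAt (b i) (D i) q := by
    intro i q
    have : (fun q : Fin K → ℝ => e i + D i q) = b i := by
      funext q; rw [hD]
    rw [← this]
    exact (D i).hasFDerivAt.const_add (e i)
  -- convexity
  have hconv : ConvexOn ℝ S L := by
    rw [hL']
    have h0 : (fun q => -∑ i, Real.log (b i q)) =
        fun q => ∑ i : Fin n, -Real.log (b i q) := by
      funext q; rw [Finset.sum_neg_distrib]
    rw [h0]
    refine convexOn_finset_sum hSconv _ fun i _ => ?_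
    set A : (Fin K → ℝ) →ᵃ[ℝ] ℝ :=
      ⟨fun q => b i q, (D i).toLinearMap, by
        intro p vv
        show e i + ∑ k, d i k * (vv + p) k = D i vv + (e i + ∑ k, d i k * p k)
        rw [hD]
        simp only [Pi.add_apply, mul_add, Finset.sum_add_distrib]
        ring⟩ with hA
    have hlog : ConcaveOn ℝ (A ⁻¹' Set.Ioi 0) (Real.log ∘ A) :=
      (strictConcaveOn_log_Ioi.concaveOn).comp_affineMap A
    have hsub : S ⊆ A ⁻¹' Set.Ioi 0 := fun x hx => Set.mem_Ioi.mpr (hbpos i x hx)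
    exact (hlog.subset hsub hSconv).neg
  refine ⟨hconv, ?_⟩
  intro q hq
  have hbne : ∀ i, b i q ≠ 0 := fun i => (hbpos i q hq).ne'
  -- v equals d / b on S
  have hveq : ∀ i k, v i q k = d i k / b i q := by
    intro i k
    have h1 : 0 < q k := (hq k (Set.mem_univ k)).1
    have h2 : (0:ℝ) < 1 - q k := by linarith [(hq k (Set.mem_univ k)).2]
    have hdik : d i k = (2 * Z i - 1) * c i k := rfl
    have hb0 : b i q ≠ 0 := hbne i
    rw [hv, hbeq, hdik]
    rcases hZ i with h | h <;> rw [h] <;>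
      simp only [sub_zero, sub_self, Real.rpow_zero, Real.rpow_one, mul_one, one_mul,
        zero_div, zero_sub, zero_mul, mul_zero] <;>
      field_simp <;> ring
  -- key algebraic identity for quadratic forms
  have key : ∀ u w : Fin K → ℝ,
      u ⬝ᵥ (∑ i, Matrix.vecMulVec (v i q) (v i q)).mulVec w =
      ∑ i, (∑ k, u k * v i q k) * (∑ k, v i q k * w k) := by
    intro u w
    have e1 : ∀ k, (∑ i, Matrix.vecMulVec (v i q) (v i q)).mulVec w k =
        ∑ i : Fin n, v i q k * (∑ m, v i q m * w m) := by
      intro k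
      simp only [Matrix.mulVec, dotProduct, Matrix.sum_apply,
        Matrix.vecMulVec_apply, Finset.sum_mul]
      rw [Finset.sum_comm]
      refine Finset.sum_congr rfl fun i _ => ?_
      rw [Finset.mul_sum]
      refine Finset.sum_congr rfl fun m _ => ?_
      ring
    calc (∑ k, u k * ((∑ i, Matrix.vecMulVec (v i q) (v i q)).mulVec w k))
        = ∑ k, u k * ∑ i : Fin n, v i q k * (∑ m, v i q m * w m) :=
          Finset.sum_congr rfl fun k _ => by rw [e1 k]
      _ = ∑ k, ∑ i : Fin n, u k * (v i q k * (∑ m, v i q m * w m)) :=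
          Finset.sum_congr rfl fun k _ => Finset.mul_sum _ _ _
      _ = ∑ i : Fin n, ∑ k, u k * (v i q k * (∑ m, v i q m * w m)) := Finset.sum_comm
      _ = ∑ i, (∑ k, u k * v i q k) * (∑ k, v i q k * w k) := by
          refine Finset.sum_congr rfl fun i _ => ?_
          rw [Finset.sum_mul]
          refine Finset.sum_congr rfl fun k _ => ?_
          ring
  -- positive semidefiniteness
  have hpsd : Matrix.PosSemidef (∑ i, Matrix.vecMulVec (v i q) (v i q)) := by
    rw [Matrix.posSemidef_iff_dotProduct_mulVec]
    constructor
    · show _ᴴ = _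
      rw [Matrix.conjTranspose_sum]
      refine Finset.sum_congr rfl fun i _ => ?_
      ext k m
      simp [Matrix.conjTranspose_apply, Matrix.vecMulVec_apply, mul_comm]
    · intro x
      have hx := key (star x) x
      rw [hx]
      refine Finset.sum_nonneg fun i _ => ?_
      have hsx : (∑ k, (star x) k * v i q k) = ∑ k, v i q k * x k := by
        refine Finset.sum_congr rfl fun k _ => ?_
        simp [mul_comm]
      rw [hsx]
      exact mul_self_nonneg _
  refine ⟨hpsd, ?_⟩
  intro u w
  -- first derivative
  set G : (Fin K → ℝ) → (Fin K → ℝ) →L[ℝ] ℝ :=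
    fun x => -∑ i, (b i x)⁻¹ • D i with hG
  have hLd : ∀ x, (∀ i, b i x ≠ 0) → HasFDerivAt L (G x) x := by
    intro x hx
    rw [hL']
    exact (HasFDerivAt.fun_sum fun i _ => ((hbD i x).log (hx i))).neg
  have hfd : ∀ x ∈ S, fderiv ℝ L x = G x := fun x hx =>
    (hLd x fun i => (hbpos i x hx).ne').fderiv
  -- second derivative
  set H : (Fin K → ℝ) →L[ℝ] (Fin K → ℝ) →L[ℝ] ℝ :=
    -∑ i, (((-((b i q) ^ 2)⁻¹) • D i).smulRight (D i)) with hH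
  have hGd : HasFDerivAt G H q := by
    refine HasFDerivAt.neg ?_
    refine HasFDerivAt.fun_sum fun i _ => ?_
    exact ((hasDerivAt_inv (hbne i)).comp_hasFDerivAt q (hbD i q)).smul_const (D i)
  have hGfd : fderiv ℝ L =ᶠ[nhds q] G :=
    Filter.eventuallyEq_of_mem (hSopen.mem_nhds hq) hfd
  have h2 : fderiv ℝ (fderiv ℝ L) q = H := by
    rw [hGfd.fderiv_eq]
    exact hGd.fderiv
  rw [iteratedFDeriv_two_apply, h2, key]
  have hm0 : (![u, w] : Fin 2 → Fin K → ℝ) 0 = u := rfl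
  have hm1 : (![u, w] : Fin 2 → Fin K → ℝ) 1 = w := rfl
  rw [hm0, hm1, hH]
  have happ : ∀ u' w' : Fin K → ℝ,
      (-∑ i, (((-((b i q) ^ 2)⁻¹) • D i).smulRight (D i))) u' w' =
      ∑ i, ((b i q) ^ 2)⁻¹ * (D i u') * (D i w') := by
    intro u' w'
    rw [ContinuousLinearMap.neg_apply, ContinuousLinearMap.sum_apply]
    rw [ContinuousLinearMap.neg_apply, ContinuousLinearMap.sum_apply]
    rw [← Finset.sum_neg_distrib]
    refine Finset.sum_congr rfl fun i _ => ?_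
    rw [ContinuousLinearMap.smulRight_apply, ContinuousLinearMap.smul_apply]
    simp only [smul_eq_mul]
    exact (fun B x y : ℝ => by ring :
      ∀ B x y : ℝ, -(-B⁻¹ * x * y) = B⁻¹ * x * y) _ _ _
  rw [happ]
  refine Finset.sum_congr rfl fun i _ => ?_
  have hu : (∑ k, u k * v i q k) = (b i q)⁻¹ * D i u := by
    rw [hD, Finset.mul_sum]
    refine Finset.sum_congr rfl fun k _ => ?_
    rw [hveq, div_eq_mul_inv]; ring
  have hw : (∑ k, v i q k * w k) = (b i q)⁻¹ * D i w := by
    rw [hD, Finset.mul_sum]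
    refine Finset.sum_congr rfl fun k _ => ?_
    rw [hveq, div_eq_mul_inv]; ring
  rw [hu, hw]
  exact (fun B x y => by rw [sq, mul_inv]; ring :
    ∀ B x y : ℝ, (B ^ 2)⁻¹ * x * y = B⁻¹ * x * (B⁻¹ * y)) _ _ _
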